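/- arXiv:1906.05098 — 4 statements merged into one kernel-verified Lean document; each statement's English description precedes it below -/
import Mathlib

section
/- Let α, β, γ be real numbers with β ≠ 0 and set δ := α − γ. Then E[max(α + β·Z, γ)] − max(α, γ) = |β|·φ(|δ|/|β|) − |δ|·Φ(−|δ|/|β|), where Z is a standard normal random variable. -/
open MeasureTheory Real Set Filter


/-- The standard normal density `φ(u) = (2π)^(−1/2) · exp(−u²/2)`. -/
noncomputable def stdNormalPDF (u : ℝ) : ℝ :=
  (Real.sqrt (2 * Real.pi))⁻¹ * Real.exp (-u ^ 2 / 2)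

/-- The standard normal distribution function `Φ(u) = ∫_{−∞}^{u} φ(t) dt`. -/
noncomputable def stdNormalCDF (u : ℝ) : ℝ :=
  ∫ t in Set.Iic u, stdNormalPDF t

lemma pdf_eq (u : ℝ) : stdNormalPDF u = (Real.sqrt (2 * Real.pi))⁻¹ * Real.exp (-(1/2) * u ^ 2) := by
  rw [stdNormalPDF]; ring_nf

lemma pdf_nonneg (u : ℝ) : 0 ≤ stdNormalPDF u := by
  unfold stdNormalPDF
  positivity

lemma pdf_even (u : ℝ) : stdNormalPDF (-u) = stdNormalPDF u := by
  simp [stdNormalPDF]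

lemma pdf_fun_eq : stdNormalPDF = fun u => (Real.sqrt (2 * Real.pi))⁻¹ * Real.exp (-(1/2) * u ^ 2) :=
  funext pdf_eq

lemma integrable_pdf : Integrable stdNormalPDF := by
  rw [pdf_fun_eq]
  exact (integrable_exp_neg_mul_sq (by norm_num)).const_mul _

lemma integrable_mul_pdf : Integrable (fun z => z * stdNormalPDF z) := by
  simp_rw [pdf_eq, show (fun z : ℝ => z * ((Real.sqrt (2 * Real.pi))⁻¹ * Real.exp (-(1/2) * z ^ 2))) = (fun z => (Real.sqrt (2 * Real.pi))⁻¹ * (z * Real.exp (-(1/2) * z ^ 2))) by funext z; ring]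
  exact (integrable_mul_exp_neg_mul_sq (by norm_num)).const_mul _

lemma integral_pdf : ∫ z : ℝ, stdNormalPDF z = 1 := by
  simp_rw [pdf_eq]
  rw [integral_const_mul, integral_gaussian]
  rw [show π / (1/2) = 2 * π by ring]
  rw [inv_mul_cancel₀]
  positivity

lemma tendsto_pdf_atTop : Tendsto (fun z => stdNormalPDF z) atTop (nhds 0) := by
  rw [pdf_fun_eq]
  rw [show (0:ℝ) = (Real.sqrt (2 * Real.pi))⁻¹ * 0 by ring]
  refine Tendsto.const_mul _ ?_
  refine Real.tendsto_exp_atBot.comp ?_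
  have : Tendsto (fun z : ℝ => z ^ 2) atTop atTop := tendsto_pow_atTop two_ne_zero
  have h2 := this.const_mul_atTop_of_neg (show (-(1/2) : ℝ) < 0 by norm_num)
  simpa [mul_comm] using h2

lemma hasDerivAt_neg_pdf (z : ℝ) : HasDerivAt (fun z => -stdNormalPDF z) (z * stdNormalPDF z) z := by
  have h1 : HasDerivAt (fun z : ℝ => -z ^ 2 / 2) (-z) z := by
    have := ((hasDerivAt_pow 2 z).neg).div_const 2
    exact this.congr_deriv (by simp; ring)
  have h2 := (h1.exp).const_mul (Real.sqrt (2 * Real.pi))⁻¹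
  have h3 := h2.neg
  have h4 : z * stdNormalPDF z = -((Real.sqrt (2 * Real.pi))⁻¹ * (Real.exp (-z ^ 2 / 2) * -z)) := by
    rw [stdNormalPDF]; ring
  rw [h4]
  exact h3

lemma integral_id_mul_pdf_Ioi (t : ℝ) :
    ∫ z in Set.Ioi t, z * stdNormalPDF z = stdNormalPDF t := by
  have htend : Tendsto (fun z => -stdNormalPDF z) atTop (nhds 0) := by
    simpa using tendsto_pdf_atTop.neg
  have := integral_Ioi_of_hasDerivAt_of_tendsto' (f := fun z => -stdNormalPDF z)
    (f' := fun z => z * stdNormalPDF z) (a := t) (m := 0)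
    (fun x _ => hasDerivAt_neg_pdf x) integrable_mul_pdf.integrableOn htend
  rw [this]; ring

lemma integral_pdf_Ioi (t : ℝ) :
    ∫ z in Set.Ioi t, stdNormalPDF z = 1 - stdNormalCDF t := by
  have h := intervalIntegral.integral_Iic_add_Ioi (b := t) (μ := volume) (f := stdNormalPDF)
    integrable_pdf.integrableOn integrable_pdf.integrableOn
  rw [integral_pdf] at h
  rw [stdNormalCDF]
  linarith

lemma cdf_neg (t : ℝ) : stdNormalCDF (-t) = 1 - stdNormalCDF t := by
  rw [stdNormalCDF, ← integral_comp_neg_Ioi]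
  simp_rw [pdf_even]
  exact integral_pdf_Ioi t

lemma max_eq_indicator (β δ : ℝ) :
    (fun z => max (β * z + δ) 0 * stdNormalPDF z) =
      Set.indicator {z : ℝ | 0 < β * z + δ} (fun z => (β * z + δ) * stdNormalPDF z) := by
  funext z
  by_cases h : 0 < β * z + δ
  · rw [Set.indicator_of_mem (by exact h), max_eq_left h.le]
  · rw [Set.indicator_of_notMem (by exact h), max_eq_right (not_lt.1 h), zero_mul]

lemma meas_set (β δ : ℝ) : MeasurableSet {z : ℝ | 0 < β * z + δ} := by
  have : {z : ℝ | 0 < β * z + δ} = (fun z => β * z + δ) ⁻¹' Set.Ioi 0 := rfl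
  rw [this]
  exact ((measurable_const.mul measurable_id').add_const δ) measurableSet_Ioi

lemma integrable_affine_mul_pdf (β δ : ℝ) :
    Integrable (fun z => (β * z + δ) * stdNormalPDF z) := by
  have h : (fun z : ℝ => (β * z + δ) * stdNormalPDF z) =
      (fun z => β * (z * stdNormalPDF z) + δ * stdNormalPDF z) := by
    funext z; ring
  rw [h]
  exact (integrable_mul_pdf.const_mul β).add (integrable_pdf.const_mul δ)

lemma integrable_max_mul_pdf (β δ : ℝ) :
    Integrable (fun z => max (β * z + δ) 0 * stdNormalPDF z) := by
  rw [max_eq_indicator]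
  exact (integrable_affine_mul_pdf β δ).indicator (meas_set β δ)

lemma key_pos (β δ : ℝ) (hβ : 0 < β) :
    ∫ z : ℝ, max (β * z + δ) 0 * stdNormalPDF z =
      β * stdNormalPDF (δ / β) + δ * stdNormalCDF (δ / β) := by
  have hset : {z : ℝ | 0 < β * z + δ} = Set.Ioi (-δ / β) := by
    ext z
    simp only [Set.mem_setOf_eq, Set.mem_Ioi]
    rw [div_lt_iff₀ hβ]  -- maybe wrong direction
    constructor <;> intro h <;> nlinarith
  rw [max_eq_indicator, integral_indicator (meas_set β δ), hset]
  have hsplit : ∫ z in Set.Ioi (-δ / β), (β * z + δ) * stdNormalPDF z =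
      (β * ∫ z in Set.Ioi (-δ / β), z * stdNormalPDF z) +
        δ * ∫ z in Set.Ioi (-δ / β), stdNormalPDF z := by
    have e : ∀ z : ℝ, (β * z + δ) * stdNormalPDF z =
        β * (z * stdNormalPDF z) + δ * stdNormalPDF z := fun z => by ring
    simp_rw [e]
    rw [integral_add ((integrable_mul_pdf.const_mul β).integrableOn)
      ((integrable_pdf.const_mul δ).integrableOn), integral_const_mul, integral_const_mul]
  rw [hsplit, integral_id_mul_pdf_Ioi, integral_pdf_Ioi]
  have h1 : stdNormalPDF (-δ / β) = stdNormalPDF (δ / β) := by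
    rw [show -δ / β = -(δ / β) by ring, pdf_even]
  have h2 : 1 - stdNormalCDF (-δ / β) = stdNormalCDF (δ / β) := by
    rw [show -δ / β = -(δ / β) by ring, cdf_neg]; ring
  rw [h1, h2]

lemma key (β δ : ℝ) (hβ : β ≠ 0) :
    ∫ z : ℝ, max (β * z + δ) 0 * stdNormalPDF z =
      |β| * stdNormalPDF (δ / |β|) + δ * stdNormalCDF (δ / |β|) := by
  rcases hβ.lt_or_gt with h | h
  · have habs : |β| = -β := abs_of_neg h
    have hneg : ∫ z : ℝ, max (β * z + δ) 0 * stdNormalPDF z =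
        ∫ z : ℝ, max (-β * z + δ) 0 * stdNormalPDF z := by
      rw [← integral_neg_eq_self (fun z => max (-β * z + δ) 0 * stdNormalPDF z) volume]
      congr 1; funext z
      rw [pdf_even]; ring_nf
    rw [hneg, habs, key_pos (-β) δ (by linarith)]
  · rw [abs_of_pos h, key_pos β δ h]

/-- For `β ≠ 0` and `δ := α − γ`,
`E[max(α + β·Z, γ)] − max(α, γ) = |β|·φ(|δ|/|β|) − |δ|·Φ(−|δ|/|β|)`. -/
theorem expectation_max_affine_sub_max (α β γ : ℝ) (hβ : β ≠ 0) :
    (∫ z : ℝ, max (α + β * z) γ * stdNormalPDF z) - max α γ =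
      |β| * stdNormalPDF (|α - γ| / |β|) -
        |α - γ| * stdNormalCDF (-(|α - γ| / |β|)) := by
  set δ := α - γ with hδ
  have hmax : ∀ z : ℝ, max (α + β * z) γ = γ + max (β * z + δ) 0 := by
    intro z
    rw [hδ]
    rcases le_total (α + β * z) γ with h | h
    · rw [max_eq_right h, max_eq_right (by linarith), add_zero]
    · rw [max_eq_left h, max_eq_left (by linarith)]; ring
  have hmaxa : max α γ = γ + max δ 0 := by
    rcases le_total α γ with h | h
    · rw [max_eq_right h, max_eq_right (by rw [hδ]; linarith), add_zero]
    · rw [max_eq_left h, max_eq_left (by rw [hδ]; linarith)]; ring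
  have hi : (∫ z : ℝ, max (α + β * z) γ * stdNormalPDF z)
      = γ + ∫ z : ℝ, max (β * z + δ) 0 * stdNormalPDF z := by
    have e : (fun z : ℝ => max (α + β * z) γ * stdNormalPDF z) =
        fun z => γ * stdNormalPDF z + max (β * z + δ) 0 * stdNormalPDF z := by
      funext z; rw [hmax z]; ring
    rw [e, integral_add (integrable_pdf.const_mul γ) (integrable_max_mul_pdf β δ),
      integral_const_mul, integral_pdf, mul_one]
  rw [hi, hmaxa, key β δ hβ]
  rcases le_total 0 δ with h | h
  · rw [abs_of_nonneg h, max_eq_left h, cdf_neg]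
    ring
  · rw [abs_of_nonpos h, max_eq_right h, show -δ / |β| = -(δ / |β|) by ring, pdf_even, neg_neg]
    ring
end

section
/- Let n ≥ 1 and τ > 0. Let K be an n×n real positive semidefinite matrix with all diagonal entries equal to τ². Let Λ be an n×n diagonal matrix whose diagonal entries λᵢ satisfy 0 < λᵢ ≤ λmax for all i. Let c ≥ 0 and let b ∈ ℝⁿ satisfy bᵢ² ≥ c for every i. Then bᵀ(K + Λ)⁻¹b ≥ n·c/(n·τ² + λmax); equivalently, τ² − bᵀ(K + Λ)⁻¹b ≤ τ² − n·c/(n·τ² + λmax). (This is the matrix content of the posterior-variance bound: with K the Gram matrix of a stationary covariance at n design points, Λ the sampling-variance matrix, and bᵢ = k⁰(x, vⁱ), the left side τ² − bᵀ(K+Λ)⁻¹b is the posterior variance at x.) -/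
open Matrix

lemma dp_mulVec_left {n : ℕ} (A : Matrix (Fin n) (Fin n) ℝ) (x y : Fin n → ℝ) :
    (A *ᵥ x) ⬝ᵥ y = x ⬝ᵥ (Aᵀ *ᵥ y) := by
  rw [dotProduct_comm, dotProduct_mulVec, ← mulVec_transpose, dotProduct_comm]

lemma psd_entry_sq_le {n : ℕ} {K : Matrix (Fin n) (Fin n) ℝ} (hK : K.PosSemidef)
    (i j : Fin n) : K i j ^ 2 ≤ K i i * K j j := by
  obtain ⟨B, rfl⟩ : ∃ B : Matrix (Fin n) (Fin n) ℝ, K = Bᴴ * B := by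
    open scoped MatrixOrder in
    exact ⟨CFC.sqrt K, by
      rw [← Matrix.star_eq_conjTranspose, (IsSelfAdjoint.of_nonneg (CFC.sqrt_nonneg K)).star_eq,
        CFC.sqrt_mul_sqrt_self K (Matrix.nonneg_iff_posSemidef.mpr hK)]⟩
  simp only [Matrix.mul_apply, Matrix.conjTranspose_apply, star_trivial]
  calc (∑ k, B k i * B k j) ^ 2 ≤ (∑ k, B k i ^ 2) * (∑ k, B k j ^ 2) :=
        Finset.sum_mul_sq_le_sq_mul_sq _ _ _
    _ = (∑ k, B k i * B k i) * (∑ k, B k j * B k j) := by simp [sq]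


/-- Posterior-variance bound: if `K` is PSD with all diagonal entries `τ²`,
`Λ = diag(λᵢ)` with `0 < λᵢ ≤ λmax`, `c ≥ 0` and `bᵢ² ≥ c` for all `i`, then
`bᵀ(K + Λ)⁻¹b ≥ n·c/(n·τ² + λmax)`; equivalently
`τ² − bᵀ(K + Λ)⁻¹b ≤ τ² − n·c/(n·τ² + λmax)`. -/
theorem posterior_variance_bound (n : ℕ) (hn : 1 ≤ n) (τ : ℝ) (hτ : 0 < τ)
    (K : Matrix (Fin n) (Fin n) ℝ) (hK : K.PosSemidef)
    (hKdiag : ∀ i, K i i = τ ^ 2)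
    (lam : Fin n → ℝ) (lammax : ℝ) (hlam : ∀ i, 0 < lam i ∧ lam i ≤ lammax)
    (c : ℝ) (hc : 0 ≤ c) (b : Fin n → ℝ) (hb : ∀ i, c ≤ b i ^ 2) :
    (n : ℝ) * c / ((n : ℝ) * τ ^ 2 + lammax) ≤
        b ⬝ᵥ ((K + Matrix.diagonal lam)⁻¹ *ᵥ b) ∧
      τ ^ 2 - b ⬝ᵥ ((K + Matrix.diagonal lam)⁻¹ *ᵥ b) ≤
        τ ^ 2 - (n : ℝ) * c / ((n : ℝ) * τ ^ 2 + lammax) := by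
  have i0 : Fin n := ⟨0, hn⟩
  have hlmax : 0 < lammax := lt_of_lt_of_le (hlam i0).1 (hlam i0).2
  set M : Matrix (Fin n) (Fin n) ℝ := K + Matrix.diagonal lam with hMdef
  have hDiag : (Matrix.diagonal lam).PosDef :=
    Matrix.posDef_diagonal_iff.mpr fun i => (hlam i).1
  have hM : M.PosDef := Matrix.PosDef.posSemidef_add hK hDiag
  set D : ℝ := (n : ℝ) * τ ^ 2 + lammax with hDdef
  have hD : 0 < D := by
    have : (1 : ℝ) ≤ (n : ℝ) := by exact_mod_cast hn
    positivity
  set q : ℝ := b ⬝ᵥ (M⁻¹ *ᵥ b) with hqdef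
  have hq0 : 0 ≤ q := by
    have := hM.posSemidef.inv.dotProduct_mulVec_nonneg b
    simpa [hqdef] using this
  set S0 : ℝ := b ⬝ᵥ b with hS0def
  have hS0sum : S0 = ∑ i, b i ^ 2 := by simp [hS0def, dotProduct, sq]
  have hncS0 : (n : ℝ) * c ≤ S0 := by
    rw [hS0sum]
    calc (n : ℝ) * c = ∑ _i : Fin n, c := by simp [mul_comm]
      _ ≤ ∑ i, b i ^ 2 := Finset.sum_le_sum fun i _ => hb i
  -- quadratic form upper bound
  have habs : ∀ i j, b i * K i j * b j ≤ |b i| * |b j| * τ ^ 2 := by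
    intro i j
    have h1 : b i * K i j * b j ≤ |b i * K i j * b j| := le_abs_self _
    have h2 : |K i j| ≤ τ ^ 2 := by
      have h3 := psd_entry_sq_le hK i j
      rw [hKdiag i, hKdiag j] at h3
      nlinarith [sq_abs (K i j), abs_nonneg (K i j), sq_nonneg τ]
    calc b i * K i j * b j ≤ |b i * K i j * b j| := h1
      _ = |b i| * |K i j| * |b j| := by rw [abs_mul, abs_mul]
      _ ≤ |b i| * τ ^ 2 * |b j| := by
          have := mul_le_mul_of_nonneg_right (mul_le_mul_of_nonneg_left h2 (abs_nonneg (b i)))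
            (abs_nonneg (b j)); linarith
      _ = |b i| * |b j| * τ ^ 2 := by ring
  have hKquad : b ⬝ᵥ (K *ᵥ b) ≤ (n : ℝ) * τ ^ 2 * S0 := by
    have expand : b ⬝ᵥ (K *ᵥ b) = ∑ i, ∑ j, b i * K i j * b j := by
      simp [dotProduct, Matrix.mulVec, Finset.mul_sum, mul_assoc]
    rw [expand]
    calc ∑ i, ∑ j, b i * K i j * b j ≤ ∑ i, ∑ j, |b i| * |b j| * τ ^ 2 :=
          Finset.sum_le_sum fun i _ => Finset.sum_le_sum fun j _ => habs i j
      _ = (∑ i, |b i|) ^ 2 * τ ^ 2 := by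
          rw [pow_two (∑ i, |b i|), Finset.sum_mul_sum, Finset.sum_mul]
          exact Finset.sum_congr rfl fun i _ => by rw [Finset.sum_mul]
      _ ≤ ((n : ℝ) * ∑ i, |b i| ^ 2) * τ ^ 2 := by
          have := sq_sum_le_card_mul_sum_sq (s := (Finset.univ : Finset (Fin n))) (f := fun i => |b i|)
          have h' : ((Finset.univ : Finset (Fin n)).card : ℝ) = (n : ℝ) := by simp
          apply mul_le_mul_of_nonneg_right _ (sq_nonneg τ)
          calc (∑ i, |b i|) ^ 2 ≤ ((Finset.univ : Finset (Fin n)).card : ℝ) * ∑ i, |b i| ^ 2 := by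
                exact_mod_cast this
            _ = (n : ℝ) * ∑ i, |b i| ^ 2 := by rw [h']
      _ = (n : ℝ) * τ ^ 2 * S0 := by rw [hS0sum]; simp [sq_abs]; ring
  have hMquad : b ⬝ᵥ (M *ᵥ b) ≤ D * S0 := by
    have hdiagquad : b ⬝ᵥ (Matrix.diagonal lam *ᵥ b) ≤ lammax * S0 := by
      have : b ⬝ᵥ (Matrix.diagonal lam *ᵥ b) = ∑ i, lam i * b i ^ 2 := by
        simp only [dotProduct, Matrix.mulVec_diagonal]
        exact Finset.sum_congr rfl fun i _ => by ring
      rw [this, hS0sum, Finset.mul_sum]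
      exact Finset.sum_le_sum fun i _ =>
        mul_le_mul_of_nonneg_right (hlam i).2 (sq_nonneg _)
    have : b ⬝ᵥ (M *ᵥ b) = b ⬝ᵥ (K *ᵥ b) + b ⬝ᵥ (Matrix.diagonal lam *ᵥ b) := by
      rw [hMdef, Matrix.add_mulVec, dotProduct_add]
    rw [this, hDdef]
    nlinarith [hKquad, hdiagquad]
  -- Cauchy–Schwarz: S0^2 ≤ (b M b) * q
  have hCS : S0 ^ 2 ≤ (b ⬝ᵥ (M *ᵥ b)) * q := by
    open scoped MatrixOrder in
    set Sq : Matrix (Fin n) (Fin n) ℝ := CFC.sqrt M with hSqdef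
    open scoped MatrixOrder in
    have hSqPSD : Sq.PosSemidef := Matrix.nonneg_iff_posSemidef.mp (CFC.sqrt_nonneg M)
    open scoped MatrixOrder in
    have hSqmul : Sq * Sq = M := CFC.sqrt_mul_sqrt_self M (Matrix.nonneg_iff_posSemidef.mpr hM.posSemidef)
    have hSqsymm : Sqᵀ = Sq := by
      have h := hSqPSD.isHermitian
      rwa [Matrix.IsHermitian, Matrix.conjTranspose_eq_transpose_of_trivial] at h
    have hMunit : IsUnit M.det := isUnit_iff_ne_zero.mpr (ne_of_gt hM.det_pos)
    have hSqunit : IsUnit Sq.det := by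
      have : Sq.det * Sq.det = M.det := by rw [← Matrix.det_mul, hSqmul]
      exact isUnit_of_mul_isUnit_left (this ▸ hMunit)
    set u : Fin n → ℝ := Sq *ᵥ b with hudef
    set v : Fin n → ℝ := Sq⁻¹ *ᵥ b with hvdef
    have huv : u ⬝ᵥ v = S0 := by
      rw [hudef, hvdef, dp_mulVec_left, hSqsymm, Matrix.mulVec_mulVec,
        Matrix.mul_nonsing_inv _ hSqunit, Matrix.one_mulVec]
    have huu : u ⬝ᵥ u = b ⬝ᵥ (M *ᵥ b) := by
      rw [hudef, dp_mulVec_left, hSqsymm, Matrix.mulVec_mulVec, hSqmul]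
    have hvv : v ⬝ᵥ v = q := by
      rw [hvdef, dp_mulVec_left, Matrix.transpose_nonsing_inv, hSqsymm,
        Matrix.mulVec_mulVec, ← Matrix.mul_inv_rev, hSqmul]
    calc S0 ^ 2 = (u ⬝ᵥ v) ^ 2 := by rw [huv]
      _ = (∑ i, u i * v i) ^ 2 := rfl
      _ ≤ (∑ i, u i ^ 2) * (∑ i, v i ^ 2) := Finset.sum_mul_sq_le_sq_mul_sq _ _ _
      _ = (u ⬝ᵥ u) * (v ⬝ᵥ v) := by simp [dotProduct, sq]
      _ = (b ⬝ᵥ (M *ᵥ b)) * q := by rw [huu, hvv]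
  -- conclude
  have hmain : (n : ℝ) * c / D ≤ q := by
    rw [div_le_iff₀ hD]
    rcases eq_or_lt_of_le (by rw [hS0sum]; positivity : (0:ℝ) ≤ S0) with hS0z | hS0p
    · have hcz : c = 0 := by
        have h1 : c ≤ b i0 ^ 2 := hb i0
        have h2 : b i0 ^ 2 ≤ S0 := by
          rw [hS0sum]
          exact Finset.single_le_sum (fun i _ => sq_nonneg (b i)) (Finset.mem_univ i0)
        nlinarith
      rw [hcz, mul_zero]
      exact mul_nonneg hq0 hD.le
    · have hstep : S0 ≤ D * q := by
        have h1 : S0 * S0 ≤ (D * S0) * q := by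
          calc S0 * S0 = S0 ^ 2 := (sq S0).symm
            _ ≤ (b ⬝ᵥ (M *ᵥ b)) * q := hCS
            _ ≤ (D * S0) * q := mul_le_mul_of_nonneg_right hMquad hq0
        have h2 : S0 * S0 ≤ S0 * (D * q) := by nlinarith
        exact le_of_mul_le_mul_left h2 hS0p
      calc (n : ℝ) * c ≤ S0 := hncS0
        _ ≤ D * q := hstep
        _ = q * D := mul_comm _ _
  exact ⟨hmain, by linarith⟩
end

section
/- In the Gaussian-process posterior setup below, the sequence n ↦ ⟨ξ, uⁿ⟩ is nonincreasing in n and every term is nonnegative: for all n, 0 ≤ ⟨ξ, uⁿ⁺¹⟩ ≤ ⟨ξ, uⁿ⟩ ≤ ‖ξ‖². (In the paper's notation, ⟨ξ, uⁿ⟩ = kⁿ(x,x) is the posterior variance of the Gaussian process at x after n samples, which is nonnegative and nonincreasing in the number of samples.) -/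
open Matrix
open scoped RealInnerProductSpace

variable {H : Type*} [NormedAddCommGroup H] [InnerProductSpace ℝ H]

/-- The Gram matrix `Gₙ` with entries `⟪φ i, φ j⟫ + λ i · δᵢⱼ`. -/
noncomputable def gramMat (φ : ℕ → H) (lam : ℕ → ℝ) (n : ℕ) :
    Matrix (Fin n) (Fin n) ℝ :=
  Matrix.of fun i j : Fin n => ⟪φ i, φ j⟫ + if i = j then lam i else 0

/-- The posterior vector `uⁿ := ξ − Σ_{i<n} wⁿᵢ · φ i` where `wⁿ := Gₙ⁻¹ kₙ`
and `kₙ = (⟪φ i, ξ⟫)_{i<n}`; in particular `u⁰ = ξ`. -/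
noncomputable def postVec (ξ : H) (φ : ℕ → H) (lam : ℕ → ℝ) (n : ℕ) : H :=
  ξ - ∑ i : Fin n,
    (((gramMat φ lam n)⁻¹ *ᵥ fun i : Fin n => ⟪φ i, ξ⟫) i) • φ i

/-- Auxiliary: the weighted sum `Σ wᵢ • φ i`. -/
noncomputable def sVec (φ : ℕ → H) (n : ℕ) (w : Fin n → ℝ) : H :=
  ∑ i : Fin n, w i • φ i

/-- Auxiliary: the regularized least squares objective. -/
noncomputable def Fobj (ξ : H) (φ : ℕ → H) (lam : ℕ → ℝ) (n : ℕ)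
    (w : Fin n → ℝ) : ℝ :=
  ‖ξ - sVec φ n w‖ ^ 2 + ∑ i : Fin n, lam i * w i ^ 2

/-- Auxiliary: the optimal weights. -/
noncomputable def wStar (ξ : H) (φ : ℕ → H) (lam : ℕ → ℝ) (n : ℕ) :
    Fin n → ℝ :=
  (gramMat φ lam n)⁻¹ *ᵥ fun i : Fin n => ⟪φ i, ξ⟫

lemma postVec_eq (ξ : H) (φ : ℕ → H) (lam : ℕ → ℝ) (n : ℕ) :
    postVec ξ φ lam n = ξ - sVec φ n (wStar ξ φ lam n) := rfl

lemma inner_sVec (φ : ℕ → H) (n : ℕ) (w : Fin n → ℝ) (a : H) :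
    ⟪a, sVec φ n w⟫ = ∑ i : Fin n, w i * ⟪a, φ i⟫ := by
  simp [sVec, inner_sum, real_inner_smul_right]

lemma gram_mulVec (φ : ℕ → H) (lam : ℕ → ℝ) (n : ℕ) (x : Fin n → ℝ)
    (i : Fin n) :
    (gramMat φ lam n *ᵥ x) i = ⟪φ i, sVec φ n x⟫ + lam i * x i := by
  rw [inner_sVec]
  simp only [mulVec, dotProduct, gramMat, Matrix.of_apply, add_mul,
    Finset.sum_add_distrib, ite_mul, zero_mul, Finset.sum_ite_eq,
    Finset.mem_univ, if_true]
  congr 1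
  exact Finset.sum_congr rfl fun j _ => by ring

lemma Fobj_nonneg (ξ : H) (φ : ℕ → H) (lam : ℕ → ℝ)
    (hlam : ∀ ℓ, 0 < lam ℓ) (n : ℕ) (w : Fin n → ℝ) :
    0 ≤ Fobj ξ φ lam n w := by
  have h1 : (0:ℝ) ≤ ∑ i : Fin n, lam i * w i ^ 2 :=
    Finset.sum_nonneg fun i _ => mul_nonneg (hlam _).le (sq_nonneg _)
  have h2 := sq_nonneg ‖ξ - sVec φ n w‖
  unfold Fobj; linarith

lemma gram_posDef (φ : ℕ → H) (lam : ℕ → ℝ) (hlam : ∀ ℓ, 0 < lam ℓ)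
    (n : ℕ) : (gramMat φ lam n).PosDef := by
  refine Matrix.PosDef.of_dotProduct_mulVec_pos ?_ ?_
  · ext i j
    simp only [gramMat, IsHermitian, conjTranspose_apply, of_apply,
      star_trivial]
    by_cases h : i = j
    · subst h; simp
    · simp [h, Ne.symm h, real_inner_comm]
  · intro x hx
    have hquad : dotProduct (star x) (gramMat φ lam n *ᵥ x)
        = ‖sVec φ n x‖ ^ 2 + ∑ i : Fin n, lam i * x i ^ 2 := by
      simp only [star_trivial, dotProduct]
      rw [show (∑ i : Fin n, x i * (gramMat φ lam n *ᵥ x) i)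
          = ∑ i : Fin n, (x i * ⟪φ i, sVec φ n x⟫ + lam i * x i ^ 2) from
        Finset.sum_congr rfl fun i _ => by rw [gram_mulVec]; ring]
      rw [Finset.sum_add_distrib]
      congr 1
      rw [← real_inner_self_eq_norm_sq]
      rw [show (⟪sVec φ n x, sVec φ n x⟫ : ℝ)
          = ∑ i : Fin n, x i * ⟪φ i, sVec φ n x⟫ by
        simp only [sVec, sum_inner, real_inner_smul_left]]
    rw [hquad]
    obtain ⟨i, hi⟩ : ∃ i, x i ≠ 0 := by
      by_contra h; push_neg at h; exact hx (funext h)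
    have hpos : (0:ℝ) < x i ^ 2 := by
      have := abs_pos.mpr hi
      calc (0:ℝ) < |x i| ^ 2 := by positivity
        _ = x i ^ 2 := sq_abs _
    have h1 : (0:ℝ) < ∑ i : Fin n, lam i * x i ^ 2 :=
      Finset.sum_pos' (fun j _ => mul_nonneg (hlam _).le (sq_nonneg _))
        ⟨i, Finset.mem_univ i, mul_pos (hlam _) hpos⟩
    have h2 := sq_nonneg ‖sVec φ n x‖
    linarith

/-- The normal equations. -/
lemma normal_eq (ξ : H) (φ : ℕ → H) (lam : ℕ → ℝ) (hlam : ∀ ℓ, 0 < lam ℓ)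
    (n : ℕ) (i : Fin n) :
    ⟪φ i, ξ - sVec φ n (wStar ξ φ lam n)⟫ = lam i * wStar ξ φ lam n i := by
  have hG : gramMat φ lam n *ᵥ wStar ξ φ lam n = fun i : Fin n => ⟪φ i, ξ⟫ := by
    unfold wStar
    rw [mulVec_mulVec,
      Matrix.mul_nonsing_inv _ (gram_posDef φ lam hlam n).det_pos.ne'.isUnit,
      one_mulVec]
  have hGi := congrFun hG i
  rw [gram_mulVec] at hGi
  rw [inner_sub_right]
  linarith [hGi]

/-- `wStar` minimizes `Fobj`. -/
lemma Fobj_min (ξ : H) (φ : ℕ → H) (lam : ℕ → ℝ) (hlam : ∀ ℓ, 0 < lam ℓ)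
    (n : ℕ) (w : Fin n → ℝ) :
    Fobj ξ φ lam n (wStar ξ φ lam n) ≤ Fobj ξ φ lam n w := by
  set ws := wStar ξ φ lam n with hws
  set d : Fin n → ℝ := fun i => w i - ws i with hd
  have hsplit : sVec φ n w = sVec φ n ws + sVec φ n d := by
    simp only [sVec, ← Finset.sum_add_distrib]
    exact Finset.sum_congr rfl fun i _ => by
      rw [← add_smul]; congr 1; simp [hd]
  have hcross : ⟪ξ - sVec φ n ws, sVec φ n d⟫
      = ∑ i : Fin n, d i * (lam i * ws i) := by
    rw [inner_sVec]
    exact Finset.sum_congr rfl fun i _ => by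
      rw [real_inner_comm, normal_eq ξ φ lam hlam n i]
  have hkey : Fobj ξ φ lam n w = Fobj ξ φ lam n ws
      + ‖sVec φ n d‖ ^ 2 + ∑ i : Fin n, lam i * d i ^ 2 := by
    unfold Fobj
    rw [hsplit, show ξ - (sVec φ n ws + sVec φ n d)
        = (ξ - sVec φ n ws) - sVec φ n d by abel]
    rw [norm_sub_sq_real, hcross]
    have hsum : ∑ i : Fin n, lam i * w i ^ 2
        = ∑ i : Fin n, lam i * ws i ^ 2
          + 2 * ∑ i : Fin n, d i * (lam i * ws i)
          + ∑ i : Fin n, lam i * d i ^ 2 := by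
      rw [Finset.mul_sum, ← Finset.sum_add_distrib, ← Finset.sum_add_distrib]
      refine Finset.sum_congr rfl fun i _ => ?_
      have hwi : w i = ws i + d i := by simp [hd]
      rw [hwi]; ring
    rw [hsum]; ring
  rw [hkey]
  have h1 : (0:ℝ) ≤ ∑ i : Fin n, lam i * d i ^ 2 :=
    Finset.sum_nonneg fun i _ => mul_nonneg (hlam _).le (sq_nonneg _)
  nlinarith [sq_nonneg ‖sVec φ n d‖]

/-- The posterior variance equals the minimum of the objective. -/
lemma inner_postVec_eq (ξ : H) (φ : ℕ → H) (lam : ℕ → ℝ)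
    (hlam : ∀ ℓ, 0 < lam ℓ) (n : ℕ) :
    ⟪ξ, postVec ξ φ lam n⟫ = Fobj ξ φ lam n (wStar ξ φ lam n) := by
  rw [postVec_eq]
  set ws := wStar ξ φ lam n with hws
  have ha : ξ = (ξ - sVec φ n ws) + sVec φ n ws := by abel
  nth_rewrite 1 [ha]
  rw [inner_add_left, real_inner_self_eq_norm_sq]
  unfold Fobj
  congr 1
  rw [real_inner_comm, inner_sVec]
  refine Finset.sum_congr rfl fun i _ => ?_
  rw [real_inner_comm, hws, normal_eq ξ φ lam hlam n i]
  ring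

lemma Fobj_snoc (ξ : H) (φ : ℕ → H) (lam : ℕ → ℝ) (n : ℕ) (w : Fin n → ℝ) :
    Fobj ξ φ lam (n + 1) (Fin.snoc w 0) = Fobj ξ φ lam n w := by
  unfold Fobj sVec
  rw [Fin.sum_univ_castSucc, Fin.sum_univ_castSucc]
  simp

/-- The sequence `n ↦ ⟪ξ, uⁿ⟫` (the posterior variance) is nonnegative,
nonincreasing in `n`, and bounded above by `‖ξ‖²`. -/
theorem postVariance_antitone_nonneg (ξ : H) (φ : ℕ → H) (lam : ℕ → ℝ)
    (hlam : ∀ ℓ, 0 < lam ℓ) (n : ℕ) :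
    0 ≤ ⟪ξ, postVec ξ φ lam (n + 1)⟫ ∧
      ⟪ξ, postVec ξ φ lam (n + 1)⟫ ≤ ⟪ξ, postVec ξ φ lam n⟫ ∧
      ⟪ξ, postVec ξ φ lam n⟫ ≤ ‖ξ‖ ^ 2 := by
  have e1 := inner_postVec_eq ξ φ lam hlam (n + 1)
  have e0 := inner_postVec_eq ξ φ lam hlam n
  refine ⟨?_, ?_, ?_⟩
  · rw [e1]; exact Fobj_nonneg ξ φ lam hlam _ _
  · rw [e1, e0, ← Fobj_snoc ξ φ lam n (wStar ξ φ lam n)]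
    exact Fobj_min ξ φ lam hlam (n + 1) _
  · rw [e0]
    have h := Fobj_min ξ φ lam hlam n (fun _ => 0)
    have h0 : Fobj ξ φ lam n (fun _ => 0) = ‖ξ‖ ^ 2 := by
      unfold Fobj sVec; simp
    linarith
end

section
/- In the Gaussian-process posterior setup below, the sequence (uⁿ) converges in the norm of H as n → ∞: there exists u∞ ∈ H with ‖uⁿ − u∞‖ → 0. (This is the abstract form of the lemma that the posterior kernel sections kⁿ(x,·) converge in the RKHS norm of the prior kernel, irrespective of the choice of design points; the proof rests on the inequality ‖uⁿ⁺ᵐ − uⁿ‖² ≤ ⟨ξ, uⁿ⟩ − ⟨ξ, uⁿ⁺ᵐ⟩ and the monotone convergence of ⟨ξ, uⁿ⟩.) -/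
open Matrix Filter
open scoped RealInnerProductSpace

variable {H : Type*} [NormedAddCommGroup H] [InnerProductSpace ℝ H]

namespace PostVecProof

noncomputable section

abbrev ES : Type := lp (fun _ : ℕ => ℝ) 2

lemma single_zero (i : ℕ) : (lp.single 2 i (0:ℝ) : ES) = 0 := by
  apply lp.ext
  funext j
  by_cases h : j = i
  · subst h; simp [lp.single_apply_self]
  · simp [lp.single_apply_ne _ _ _ h]

lemma single_sub (i : ℕ) (a b : ℝ) :
    (lp.single 2 i (a - b) : ES) = lp.single 2 i a - lp.single 2 i b := by
  apply lp.ext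
  rw [lp.coeFn_sub]
  funext j
  by_cases h : j = i
  · subst h; simp [lp.single_apply_self]
  · simp [lp.single_apply_ne _ _ _ h]

lemma inner_single_single (i j : ℕ) (a b : ℝ) :
    ⟪(lp.single 2 i a : ES), lp.single 2 j b⟫ = if i = j then a * b else 0 := by
  rw [lp.inner_single_left]
  by_cases h : i = j
  · subst h
    simp [lp.single_apply_self, RCLike.inner_apply, mul_comm]
  · rw [lp.single_apply_ne _ _ _ h]
    simp [h]

lemma WithLp.equiv_symm_fst {α β : Type*} (x : α × β) :
    ((_root_.WithLp.equiv 2 (α × β)).symm x).ofLp.1 = x.1 := rfl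

lemma WithLp.equiv_symm_snd {α β : Type*} (x : α × β) :
    ((_root_.WithLp.equiv 2 (α × β)).symm x).ofLp.2 = x.2 := rfl

lemma WithLp.equiv_symm_sub {V : Type*} [AddCommGroup V] (x y : V) :
    (_root_.WithLp.equiv 2 V).symm (x - y)
      = (_root_.WithLp.equiv 2 V).symm x - (_root_.WithLp.equiv 2 V).symm y := rfl

variable (ξ : H) (φ : ℕ → H) (lam : ℕ → ℝ)

def kvec (n : ℕ) : Fin n → ℝ := fun i => ⟪φ i, ξ⟫

def wv (n : ℕ) : Fin n → ℝ := (gramMat φ lam n)⁻¹ *ᵥ kvec ξ φ n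

def W (n : ℕ) : ℕ → ℝ := fun j => if h : j < n then wv ξ φ lam n ⟨j, h⟩ else 0

def emb (n : ℕ) (c : ℕ → ℝ) : WithLp 2 (H × ES) :=
  (WithLp.equiv 2 (H × ES)).symm
    (∑ i ∈ Finset.range n, c i • φ i,
     ∑ i ∈ Finset.range n, lp.single 2 i (Real.sqrt (lam i) * c i))

def Xi : WithLp 2 (H × ES) := (WithLp.equiv 2 (H × ES)).symm (ξ, 0)

def vv (n : ℕ) : WithLp 2 (H × ES) := emb φ lam n (W ξ φ lam n)

lemma inner_emb_emb (hlam : ∀ ℓ, 0 < lam ℓ) (n : ℕ) (c c' : ℕ → ℝ) :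
    ⟪emb φ lam n c, emb φ lam n c'⟫
      = (∑ i ∈ Finset.range n, ∑ j ∈ Finset.range n, c i * c' j * ⟪φ i, φ j⟫)
        + ∑ i ∈ Finset.range n, lam i * (c i * c' i) := by
  rw [emb, emb, WithLp.prod_inner_apply, WithLp.equiv_symm_fst, WithLp.equiv_symm_fst,
    WithLp.equiv_symm_snd, WithLp.equiv_symm_snd]
  congr 1
  · rw [sum_inner]
    refine Finset.sum_congr rfl fun i hi => ?_
    rw [inner_sum]
    refine Finset.sum_congr rfl fun j hj => ?_
    rw [real_inner_smul_left, real_inner_smul_right]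
    ring
  · rw [sum_inner]
    rw [Finset.sum_congr rfl (fun i hi => inner_sum (𝕜 := ℝ) _ _ _)]
    simp only [inner_single_single]
    rw [Finset.sum_congr rfl (fun i hi => Finset.sum_ite_eq (Finset.range n) i
      (fun j => Real.sqrt (lam i) * c i * (Real.sqrt (lam j) * c' j)))]
    refine Finset.sum_congr rfl fun i hi => ?_
    rw [if_pos hi]
    have h : Real.sqrt (lam i) * Real.sqrt (lam i) = lam i :=
      Real.mul_self_sqrt (hlam i).le
    conv_rhs => rw [← h]
    ring

lemma inner_Xi_emb (n : ℕ) (c : ℕ → ℝ) :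
    ⟪Xi ξ, emb φ lam n c⟫ = ∑ j ∈ Finset.range n, c j * ⟪φ j, ξ⟫ := by
  rw [Xi, emb, WithLp.prod_inner_apply, WithLp.equiv_symm_fst, WithLp.equiv_symm_fst,
    WithLp.equiv_symm_snd, WithLp.equiv_symm_snd, inner_zero_left, add_zero, inner_sum]
  refine Finset.sum_congr rfl fun j hj => ?_
  rw [real_inner_smul_right, real_inner_comm]

lemma gram_posdef (hlam : ∀ ℓ, 0 < lam ℓ) (n : ℕ) : (gramMat φ lam n).PosDef := by
  rw [Matrix.posDef_iff_dotProduct_mulVec]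
  constructor
  · ext i j
    simp only [gramMat, Matrix.conjTranspose_apply, Matrix.of_apply, star_trivial]
    rw [real_inner_comm]
    congr 1
    by_cases h : i = j
    · subst h; simp
    · rw [if_neg h, if_neg (Ne.symm h)]
  · intro x hx
    rw [star_trivial]
    have hexp : x ⬝ᵥ (gramMat φ lam n *ᵥ x)
        = ⟪∑ i : Fin n, x i • φ i, ∑ j : Fin n, x j • φ j⟫
          + ∑ i : Fin n, lam i * (x i * x i) := by
      simp only [dotProduct, Matrix.mulVec, dotProduct, gramMat, Matrix.of_apply,
        add_mul, mul_add, Finset.mul_sum, Finset.sum_add_distrib]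
      congr 1
      · rw [sum_inner (𝕜 := ℝ)]
        refine Finset.sum_congr rfl fun i _ => ?_
        rw [inner_sum]
        refine Finset.sum_congr rfl fun j _ => ?_
        rw [real_inner_smul_left, real_inner_smul_right]
        ring
      · refine Finset.sum_congr rfl fun i _ => ?_
        simp only [ite_mul, zero_mul, mul_ite, mul_zero]
        rw [Finset.sum_ite_eq (Finset.univ : Finset (Fin n)) i (fun j => x i * (lam ↑i * x j))]
        simp only [Finset.mem_univ, if_pos]
        ring
    rw [hexp]
    have h1 : (0:ℝ) ≤ ⟪∑ i : Fin n, x i • φ i, ∑ j : Fin n, x j • φ j⟫ :=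
      real_inner_self_nonneg
    have h2 : 0 < ∑ i : Fin n, lam i * (x i * x i) := by
      obtain ⟨i, hi⟩ := Function.ne_iff.mp hx
      refine Finset.sum_pos' (fun j _ => ?_) ⟨i, Finset.mem_univ i, ?_⟩
      · exact mul_nonneg (hlam j).le (mul_self_nonneg _)
      · exact mul_pos (hlam i) (mul_self_pos.mpr hi)
    linarith

lemma row_eq (hlam : ∀ ℓ, 0 < lam ℓ) (n : ℕ) (j : Fin n) :
    (∑ i : Fin n, wv ξ φ lam n i * ⟪φ i, φ j⟫) + lam j * wv ξ φ lam n j = ⟪φ j, ξ⟫ := by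
  have hpd := gram_posdef φ lam hlam n
  have hdet : IsUnit (gramMat φ lam n).det := hpd.det_pos.ne'.isUnit
  have hGw : gramMat φ lam n *ᵥ wv ξ φ lam n = kvec ξ φ n := by
    rw [wv, Matrix.mulVec_mulVec, Matrix.mul_nonsing_inv _ hdet, Matrix.one_mulVec]
  have := congrFun hGw j
  simp only [Matrix.mulVec, dotProduct, gramMat, Matrix.of_apply, kvec,
    add_mul, ite_mul, zero_mul, Finset.sum_add_distrib] at this
  rw [Finset.sum_ite_eq (Finset.univ : Finset (Fin n)) j
    (fun i => lam (j:ℕ) * wv ξ φ lam n i)] at this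
  simp only [Finset.mem_univ, if_pos] at this
  rw [← this]
  congr 1
  refine Finset.sum_congr rfl fun i _ => ?_
  rw [real_inner_comm, mul_comm]

lemma hW_eq (n : ℕ) (i : Fin n) : W ξ φ lam n i = wv ξ φ lam n i := by
  rw [W, dif_pos i.isLt]

lemma ortho (hlam : ∀ ℓ, 0 < lam ℓ) (n : ℕ) (c : ℕ → ℝ) :
    ⟪ Xi ξ - vv ξ φ lam n, emb φ lam n c⟫ = 0 := by
  rw [inner_sub_left, sub_eq_zero, inner_Xi_emb, vv, inner_emb_emb φ lam hlam]
  rw [Finset.sum_comm, ← Finset.sum_add_distrib]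
  refine Finset.sum_congr rfl fun j hj => ?_
  rw [Finset.mem_range] at hj
  have hWj : W ξ φ lam n j = wv ξ φ lam n ⟨j, hj⟩ := dif_pos hj
  have key := row_eq ξ φ lam hlam n ⟨j, hj⟩
  simp only [Fin.val_mk] at key
  have hsum : ∑ i ∈ Finset.range n, W ξ φ lam n i * c j * ⟪φ i, φ j⟫
      = (∑ i : Fin n, wv ξ φ lam n i * ⟪φ i, φ j⟫) * c j := by
    rw [Finset.sum_range, Finset.sum_mul]
    refine Finset.sum_congr rfl fun i _ => ?_
    rw [hW_eq ξ φ lam n i]; ring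
  rw [hsum, hWj]
  rw [← key]; ring

lemma emb_extend {n m : ℕ} (h : n ≤ m) (c : ℕ → ℝ) (hc : ∀ j, n ≤ j → c j = 0) :
    emb φ lam m c = emb φ lam n c := by
  rw [emb, emb]
  congr 1
  refine Prod.ext ?_ ?_
  · refine (Finset.sum_subset (Finset.range_subset_range.2 h) fun j _ hj => ?_).symm
    rw [hc j (by simpa using hj), zero_smul]
  · refine (Finset.sum_subset (Finset.range_subset_range.2 h) fun j _ hj => ?_).symm
    rw [hc j (by simpa using hj), mul_zero, single_zero]

lemma emb_sub (n : ℕ) (c c' : ℕ → ℝ) :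
    emb φ lam n c - emb φ lam n c' = emb φ lam n (c - c') := by
  rw [emb, emb, emb, ← WithLp.equiv_symm_sub]
  congr 1
  refine Prod.ext ?_ ?_
  · simp only [Prod.fst_sub, ← Finset.sum_sub_distrib]
    exact Finset.sum_congr rfl fun i _ => by rw [Pi.sub_apply, sub_smul]
  · simp only [Prod.snd_sub, ← Finset.sum_sub_distrib]
    exact Finset.sum_congr rfl fun i _ => by rw [Pi.sub_apply, mul_sub, single_sub]

lemma vv_sub {n m : ℕ} (h : n ≤ m) :
    vv ξ φ lam m - vv ξ φ lam n = emb φ lam m (W ξ φ lam m - W ξ φ lam n) := by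
  have h1 : vv ξ φ lam n = emb φ lam m (W ξ φ lam n) := by
    rw [vv]
    exact (emb_extend φ lam h _ fun j hj => dif_neg (not_lt.2 hj)).symm
  rw [vv, h1, emb_sub]

lemma norm_sq_split (hlam : ∀ ℓ, 0 < lam ℓ) {n m : ℕ} (h : n ≤ m) :
    ‖Xi ξ - vv ξ φ lam n‖^2
      = ‖Xi ξ - vv ξ φ lam m‖^2 + ‖vv ξ φ lam m - vv ξ φ lam n‖^2 := by
  have hdecomp : Xi ξ - vv ξ φ lam n
      = (Xi ξ - vv ξ φ lam m) + (vv ξ φ lam m - vv ξ φ lam n) := by abel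
  rw [hdecomp, norm_add_sq_real, vv_sub ξ φ lam h,
    ortho ξ φ lam hlam m (W ξ φ lam m - W ξ φ lam n)]
  ring

lemma vv_cauchy (hlam : ∀ ℓ, 0 < lam ℓ) : CauchySeq (vv ξ φ lam) := by
  set D : ℕ → ℝ := fun n => ‖Xi ξ - vv ξ φ lam n‖^2 with hD
  have hD_anti : Antitone D := by
    intro n m h
    have h' : D n = D m + ‖vv ξ φ lam m - vv ξ φ lam n‖^2 :=
      norm_sq_split ξ φ lam hlam h
    nlinarith [sq_nonneg ‖vv ξ φ lam m - vv ξ φ lam n‖]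
  have hD_nonneg : ∀ n, 0 ≤ D n := fun n => sq_nonneg _
  have hbdd : BddBelow (Set.range D) := ⟨0, by rintro _ ⟨n, rfl⟩; exact hD_nonneg n⟩
  set L : ℝ := ⨅ n, D n with hL
  have hDL : Tendsto D atTop (nhds L) := tendsto_atTop_ciInf hD_anti hbdd
  have hL_le : ∀ n, L ≤ D n := fun n => ciInf_le hbdd n
  refine cauchySeq_of_le_tendsto_0 (fun N => Real.sqrt (D N - L)) ?_ ?_
  · intro n m N hn hm
    wlog hnm : n ≤ m generalizing n m
    · rw [dist_comm]
      exact this m n hm hn (le_of_not_ge hnm)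
    have hsplit : D n = D m + ‖vv ξ φ lam m - vv ξ φ lam n‖^2 :=
      norm_sq_split ξ φ lam hlam hnm
    have hdist : dist (vv ξ φ lam n) (vv ξ φ lam m) ^ 2 = D n - D m := by
      rw [dist_eq_norm, ← norm_neg, neg_sub]
      linarith [hsplit]
    have h1 : D n - D m ≤ D N - L := by
      have := hD_anti hn
      have := hL_le m
      linarith
    calc dist (vv ξ φ lam n) (vv ξ φ lam m)
        = Real.sqrt (dist (vv ξ φ lam n) (vv ξ φ lam m) ^ 2) :=
          (Real.sqrt_sq dist_nonneg).symm
      _ ≤ Real.sqrt (D N - L) := Real.sqrt_le_sqrt (by rw [hdist]; exact h1)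
  · have : Tendsto (fun N => D N - L) atTop (nhds (L - L)) :=
      hDL.sub tendsto_const_nhds
    rw [sub_self] at this
    have := (Real.continuous_sqrt.tendsto 0).comp this
    simpa [Function.comp_def] using this

end

end PostVecProof


/-- The sequence `uⁿ` of posterior kernel sections converges in the norm of `H`. -/
theorem postVec_converges [CompleteSpace H] (ξ : H) (φ : ℕ → H) (lam : ℕ → ℝ)
    (hlam : ∀ ℓ, 0 < lam ℓ) :
    ∃ uinf : H, Tendsto (fun n => postVec ξ φ lam n) atTop (nhds uinf) := by
  classical
  obtain ⟨vL, hvL⟩ := cauchySeq_tendsto_of_complete (PostVecProof.vv_cauchy ξ φ lam hlam)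
  have hrepr : ∀ n, postVec ξ φ lam n
      = ξ - (WithLp.equiv 2 (H × PostVecProof.ES) (PostVecProof.vv ξ φ lam n)).1 := by
    intro n
    rw [postVec, PostVecProof.vv, PostVecProof.emb, Equiv.apply_symm_apply]
    congr 1
    rw [Finset.sum_range (fun i => PostVecProof.W ξ φ lam n i • φ i)]
    exact Finset.sum_congr rfl fun i _ => by
      rw [PostVecProof.hW_eq ξ φ lam n i]; rfl
  have hcont : Continuous
      (fun x : WithLp 2 (H × PostVecProof.ES) => (WithLp.equiv 2 (H × PostVecProof.ES) x).1) :=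
    continuous_fst.comp (WithLp.prodContinuousLinearEquiv 2 ℝ H PostVecProof.ES).continuous
  refine ⟨ξ - (WithLp.equiv 2 (H × PostVecProof.ES) vL).1, ?_⟩
  have h1 := (hcont.tendsto vL).comp hvL
  simp only [Function.comp_def] at h1
  have h2 := Tendsto.sub
    (tendsto_const_nhds : Tendsto (fun _ : ℕ => ξ) atTop (nhds ξ)) h1
  exact h2.congr fun n => (hrepr n).symm
end
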